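/- Let β₁ > 1 > 0 > β₂ with β₂ < -1, and K > 0. Then the equation ((β₁-1)(β₂-1)Kg - β₁(β₂-1)) g^{β₁} = ((β₁-1)(β₂-1)Kg - β₂(β₁-1)) g^{β₂} has exactly two solutions g in (0, ∞), and exactly one of them satisfies g > β₁²/((β₁² - 1)K). -/

import Mathlib

open Set

set_option maxHeartbeats 4000000

theorem g35a_two_solutions (β₁ β₂ K : ℝ) (hβ₁ : 1 < β₁) (hβ₂ : β₂ < -1) (hK : 0 < K) :
    ∃ g₁ g₂ : ℝ, 0 < g₁ ∧ 0 < g₂ ∧ g₁ ≠ g₂ ∧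
      (((β₁ - 1) * (β₂ - 1) * K * g₁ - β₁ * (β₂ - 1)) * g₁ ^ β₁ =
        ((β₁ - 1) * (β₂ - 1) * K * g₁ - β₂ * (β₁ - 1)) * g₁ ^ β₂) ∧
      (((β₁ - 1) * (β₂ - 1) * K * g₂ - β₁ * (β₂ - 1)) * g₂ ^ β₁ =
        ((β₁ - 1) * (β₂ - 1) * K * g₂ - β₂ * (β₁ - 1)) * g₂ ^ β₂) ∧
      (∀ g : ℝ, 0 < g →
        ((β₁ - 1) * (β₂ - 1) * K * g - β₁ * (β₂ - 1)) * g ^ β₁ =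
          ((β₁ - 1) * (β₂ - 1) * K * g - β₂ * (β₁ - 1)) * g ^ β₂ → g = g₁ ∨ g = g₂) ∧
      g₁ > β₁^2 / ((β₁^2 - 1) * K) ∧ ¬ g₂ > β₁^2 / ((β₁^2 - 1) * K) := by
  have hβ₁0 : (0:ℝ) < β₁ := by linarith
  set a := β₁ - 1 with ha_def
  set b := β₂ - 1 with hb_def
  set p := β₁ - β₂ with hp_def
  have ha : 0 < a := by rw [ha_def]; linarith
  have hbneg : b < 0 := by rw [hb_def]; linarith
  have hp2 : 2 < p := by rw [hp_def]; linarith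
  have hp1 : 1 ≤ p := by linarith
  have hp0 : 0 < p := by linarith
  have haK : 0 < a * K := mul_pos ha hK
  set F : ℝ → ℝ := fun g => b * (a * K * g - β₁) * g ^ p - a * (b * K * g - β₂) with hF_def
  clear_value a b p
  clear_value F
  -- equivalence between the original equation and F g = 0
  have hEquiv : ∀ g : ℝ, 0 < g →
      ((a * b * K * g - β₁ * b) * g ^ β₁ = (a * b * K * g - β₂ * a) * g ^ β₂ ↔ F g = 0) := by
    intro g hg
    have hgβ₂ : g ^ β₂ ≠ 0 := (Real.rpow_pos_of_pos hg β₂).ne'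
    have hsplit : g ^ β₁ = g ^ p * g ^ β₂ := by
      rw [← Real.rpow_add hg, hp_def]; ring_nf
    rw [hsplit, ← sub_eq_zero]
    have hkey : (a * b * K * g - β₁ * b) * (g ^ p * g ^ β₂) - (a * b * K * g - β₂ * a) * g ^ β₂
        = F g * g ^ β₂ := by
      simp only [hF_def]; ring
    rw [hkey, mul_eq_zero]
    simp [hgβ₂]
  -- the auxiliary function controlling the derivative of F
  set G : ℝ → ℝ := fun g => g ^ (p - 1) * (a * K * (1 + p) * g - p * β₁) with hG_def
  clear_value G
  have hFderiv : ∀ g : ℝ, 0 < g → HasDerivAt F (b * (G g - a * K)) g := by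
    intro g hg
    have h1 : HasDerivAt (fun x : ℝ => x ^ p) (p * g ^ (p - 1)) g :=
      Real.hasDerivAt_rpow_const (Or.inl hg.ne')
    have h2 : HasDerivAt (fun x : ℝ => b * (a * K * x - β₁)) (b * (a * K)) g := by
      simpa using (((hasDerivAt_id g).const_mul (a * K)).sub_const β₁).const_mul b
    have h3 : HasDerivAt (fun x : ℝ => a * (b * K * x - β₂)) (a * (b * K)) g := by
      simpa using (((hasDerivAt_id g).const_mul (b * K)).sub_const β₂).const_mul a
    have h4 := (h2.mul h1).sub h3
    rw [hF_def]
    have hgp : g ^ p = g ^ (p - 1) * g := by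
      rw [← Real.rpow_add_one hg.ne' (p - 1)]; norm_num
    refine h4.congr_deriv ?_
    simp only [hG_def]
    rw [hgp]; ring
  -- turning point of G
  set t₀ := p * β₁ / (a * K * (1 + p)) with ht₀_def
  clear_value t₀
  have hden : 0 < a * K * (1 + p) := by positivity
  have ht₀ : 0 < t₀ := by rw [ht₀_def]; positivity
  have ht₀eq : a * K * (1 + p) * t₀ = p * β₁ := by
    rw [ht₀_def]; field_simp
  have hGmono : StrictMonoOn G (Ici t₀) := by
    intro x hx y hy hxy
    simp only [hG_def]
    have hx0 : 0 < x := lt_of_lt_of_le ht₀ hx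
    have hy0 : 0 < y := lt_of_lt_of_le ht₀ hy
    have h1 : x ^ (p - 1) < y ^ (p - 1) := Real.rpow_lt_rpow hx0.le hxy (by linarith)
    have hx1 : 0 < x ^ (p - 1) := Real.rpow_pos_of_pos hx0 _
    have hsx : 0 ≤ a * K * (1 + p) * x - p * β₁ := by nlinarith [hx, mem_Ici.mp hx]
    have hsy : 0 < a * K * (1 + p) * y - p * β₁ := by
      have := mem_Ici.mp hy
      nlinarith
    have hsxy : a * K * (1 + p) * x - p * β₁ ≤ a * K * (1 + p) * y - p * β₁ := by nlinarith
    calc x ^ (p - 1) * (a * K * (1 + p) * x - p * β₁)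
        ≤ x ^ (p - 1) * (a * K * (1 + p) * y - p * β₁) :=
          mul_le_mul_of_nonneg_left hsxy hx1.le
      _ < y ^ (p - 1) * (a * K * (1 + p) * y - p * β₁) :=
          mul_lt_mul_of_pos_right h1 hsy
  have hGt₀ : G t₀ = 0 := by
    simp only [hG_def]
    rw [ht₀eq]; ring_nf
  -- existence of the critical point c with G c = a*K
  obtain ⟨c, hcmem, hGc⟩ : ∃ c ∈ Icc t₀ (max 1 (t₀ + 1)), G c = a * K := by
    set g₀ := max 1 (t₀ + 1) with hg₀_def
    have hg₀1 : (1:ℝ) ≤ g₀ := le_max_left _ _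
    have hg₀t : t₀ + 1 ≤ g₀ := le_max_right _ _
    have hg₀0 : 0 < g₀ := by linarith
    have hGg₀ : a * K ≤ G g₀ := by
      simp only [hG_def]
      have h1 : (1:ℝ) ≤ g₀ ^ (p - 1) := Real.one_le_rpow hg₀1 (by linarith)
      have h2 : a * K * (1 + p) ≤ a * K * (1 + p) * g₀ - p * β₁ := by nlinarith
      calc a * K ≤ a * K * (1 + p) := by linarith [mul_pos haK hp0]
        _ = 1 * (a * K * (1 + p)) := (one_mul _).symm
        _ ≤ g₀ ^ (p - 1) * (a * K * (1 + p) * g₀ - p * β₁) :=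
            mul_le_mul h1 h2 (by positivity) (by positivity)
    have hcont : ContinuousOn G (Icc t₀ g₀) := by
      rw [hG_def]
      intro x hx
      have hx0 : 0 < x := lt_of_lt_of_le ht₀ hx.1
      exact ((Real.continuousAt_rpow_const x (p - 1) (Or.inl hx0.ne')).mul
        (by fun_prop)).continuousWithinAt
    have := intermediate_value_Icc (by linarith : t₀ ≤ g₀) hcont
    have hmem : a * K ∈ Icc (G t₀) (G g₀) := by
      rw [hGt₀]; exact ⟨haK.le, hGg₀⟩
    obtain ⟨c, hc, hGc⟩ := this hmem
    exact ⟨c, hc, hGc⟩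
  have hct₀ : t₀ < c := by
    rcases lt_or_eq_of_le hcmem.1 with h | h
    · exact h
    · exfalso; rw [← h, hGt₀] at hGc; exact haK.ne' hGc.symm
  have hc0 : 0 < c := lt_trans ht₀ hct₀
  -- sign of the derivative
  have hGlt : ∀ x : ℝ, 0 < x → x < c → G x < a * K := by
    intro x hx0 hxc
    rcases le_or_gt x t₀ with h | h
    · have h1 : 0 < x ^ (p - 1) := Real.rpow_pos_of_pos hx0 _
      have h2 : a * K * (1 + p) * x - p * β₁ ≤ 0 := by nlinarith
      simp only [hG_def]
      calc x ^ (p - 1) * (a * K * (1 + p) * x - p * β₁) ≤ 0 :=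
            mul_nonpos_of_nonneg_of_nonpos h1.le h2
        _ < a * K := haK
    · have := hGmono (mem_Ici.mpr h.le) (mem_Ici.mpr hcmem.1) hxc
      rwa [hGc] at this
  have hGgt : ∀ x : ℝ, c < x → a * K < G x := by
    intro x hcx
    have := hGmono (mem_Ici.mpr hcmem.1) (mem_Ici.mpr (by linarith : t₀ ≤ x)) hcx
    rwa [hGc] at this
  -- monotonicity of F
  have hFcontAt : ∀ x : ℝ, 0 < x → ContinuousAt F x := fun x hx =>
    (hFderiv x hx).continuousAt
  have hmono : StrictMonoOn F (Ioc 0 c) := by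
    apply strictMonoOn_of_deriv_pos (convex_Ioc 0 c)
    · exact fun x hx => (hFcontAt x hx.1).continuousWithinAt
    · intro x hx
      rw [interior_Ioc] at hx
      rw [(hFderiv x hx.1).deriv]
      have := hGlt x hx.1 hx.2
      exact mul_pos_of_neg_of_neg hbneg (by linarith)
  have hanti : StrictAntiOn F (Ici c) := by
    apply strictAntiOn_of_deriv_neg (convex_Ici c)
    · exact fun x hx => (hFcontAt x (lt_of_lt_of_le hc0 hx)).continuousWithinAt
    · intro x hx
      rw [interior_Ici] at hx
      rw [(hFderiv x (lt_trans hc0 hx)).deriv]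
      have := hGgt x hx
      exact mul_neg_of_neg_of_pos hbneg (by linarith)
  -- the threshold M and positivity of F M
  set M := β₁ ^ 2 / ((β₁ ^ 2 - 1) * K) with hM_def
  clear_value M
  have hsq : 0 < β₁ ^ 2 - 1 := by nlinarith
  have hM0 : 0 < M := by rw [hM_def]; positivity
  have hA : a * K * M = (β₁ - 1) * β₁ ^ 2 / (β₁ ^ 2 - 1) := by
    rw [hM_def, ha_def]; field_simp
  have hB : b * K * M = (β₂ - 1) * β₁ ^ 2 / (β₁ ^ 2 - 1) := by
    rw [hM_def, hb_def]; field_simp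
  have e1 : a * K * M - β₁ < 0 := by
    have h : a * K * M < β₁ := by
      rw [hA, div_lt_iff₀ hsq]; nlinarith
    linarith
  have e2 : b * K * M - β₂ < 0 := by
    have h : b * K * M < β₂ := by
      rw [hB, div_lt_iff₀ hsq]; nlinarith
    linarith
  have hFM : 0 < F M := by
    have hMp : 0 < M ^ p := Real.rpow_pos_of_pos hM0 p
    have h1 : 0 < b * (a * K * M - β₁) * M ^ p :=
      mul_pos (mul_pos_of_neg_of_neg hbneg e1) hMp
    have h2 : a * (b * K * M - β₂) < 0 := mul_neg_of_pos_of_neg ha e2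
    simp only [hF_def]
    linarith
  -- a small point u with F u < 0
  have hbβ : 0 < -b * β₁ - a * b * K := by
    linarith [mul_neg_of_neg_of_pos hbneg hβ₁0,
      mul_neg_of_neg_of_pos (mul_neg_of_pos_of_neg ha hbneg) hK]
  set C := -b * β₁ - a * b * K with hC_def
  clear_value C
  set u := (1/2) * min (min 1 (β₁ / (a * K))) (min M (a * (-β₂) / C)) with hu_def
  clear_value u
  have hu0 : 0 < u := by
    rw [hu_def]
    have : 0 < a * (-β₂) / C := by
      apply div_pos (mul_pos ha (by linarith)) hbβ
    positivity
  have hu1 : u ≤ 1/2 := by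
    rw [hu_def]
    linarith [min_le_left (min 1 (β₁ / (a*K))) (min M (a * (-β₂) / C)),
      min_le_left (1:ℝ) (β₁ / (a*K))]
  have huβ : a * K * u < β₁ := by
    have h1 : u ≤ (1/2) * (β₁ / (a*K)) := by
      rw [hu_def]
      linarith [min_le_left (min 1 (β₁ / (a*K))) (min M (a * (-β₂) / C)),
        min_le_right (1:ℝ) (β₁ / (a*K))]
    have h2 : 0 < β₁ / (a*K) := by positivity
    calc a * K * u ≤ a * K * ((1/2) * (β₁ / (a*K))) :=
          mul_le_mul_of_nonneg_left h1 haK.le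
      _ = (1/2) * (β₁ / (a*K) * (a*K)) := by rw [mul_comm (a*K), mul_assoc]
      _ = (1/2) * β₁ := by rw [div_mul_cancel₀ _ haK.ne']
      _ < β₁ := by linarith
  have huM : u < M := by
    have h1 : u ≤ (1/2) * M := by
      rw [hu_def]
      linarith [min_le_right (min 1 (β₁ / (a*K))) (min M (a * (-β₂) / C)),
        min_le_left M (a * (-β₂) / C)]
    linarith
  have huC : (-b * β₁ - a * b * K) * u + a * β₂ < 0 := by
    rw [← hC_def]
    have h1 : u ≤ (1/2) * (a * (-β₂) / C) := by
      rw [hu_def]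
      linarith [min_le_right (min 1 (β₁ / (a*K))) (min M (a * (-β₂) / C)),
        min_le_right M (a * (-β₂) / C)]
    have h2 : C * u ≤ C * ((1/2) * (a * (-β₂) / C)) :=
      mul_le_mul_of_nonneg_left h1 hbβ.le
    have h3 : C * ((1/2) * (a * (-β₂) / C)) = (1/2) * (a * (-β₂)) := by
      rw [mul_comm C, mul_assoc, div_mul_cancel₀ _ hbβ.ne']
    have h4 : 0 < a * (-β₂) := mul_pos ha (by linarith)
    linarith
  have hFu : F u < 0 := by
    have hup : u ^ p ≤ u := by
      have := Real.rpow_le_rpow_of_exponent_ge hu0 (by linarith : u ≤ 1) hp1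
      rwa [Real.rpow_one] at this
    have hup0 : 0 < u ^ p := Real.rpow_pos_of_pos hu0 p
    have hX : 0 < b * (a * K * u - β₁) := mul_pos_of_neg_of_neg hbneg (by linarith)
    have hXle : b * (a * K * u - β₁) ≤ -b * β₁ := by
      have h5 : b * (a * K * u) < 0 := mul_neg_of_neg_of_pos hbneg (mul_pos haK hu0)
      nlinarith [h5]
    have ht1 : b * (a * K * u - β₁) * u ^ p ≤ (-b * β₁) * u :=
      le_trans (mul_le_mul_of_nonneg_left hup hX.le)
        (mul_le_mul_of_nonneg_right hXle hu0.le)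
    simp only [hF_def]
    nlinarith [ht1, huC]
  -- a large point v with F v < 0
  set v := max (max 3 (M + 1)) (2 * β₁ / (a * K)) with hv_def
  clear_value v
  have hv3 : (3:ℝ) ≤ v := by
    rw [hv_def]; exact le_trans (le_max_left _ _) (le_max_left _ _)
  have hvM : M + 1 ≤ v := by
    rw [hv_def]; exact le_trans (le_max_right _ _) (le_max_left _ _)
  have hv0 : 0 < v := by linarith
  have hvβ : 2 * β₁ ≤ a * K * v := by
    have h : 2 * β₁ / (a * K) ≤ v := by rw [hv_def]; exact le_max_right _ _
    rw [div_le_iff₀ haK] at h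
    linarith [h]
  have hFv : F v < 0 := by
    have hvp : v ≤ v ^ p := by
      have := Real.rpow_le_rpow_of_exponent_le (by linarith : (1:ℝ) ≤ v) hp1
      rwa [Real.rpow_one] at this
    have hX : b * (a * K * v - β₁) < 0 := mul_neg_of_neg_of_pos hbneg (by linarith)
    have ht1 : b * (a * K * v - β₁) * v ^ p ≤ b * (a * K * v - β₁) * v :=
      mul_le_mul_of_nonpos_left hvp hX.le
    have ht2 : b * (a * K * v - β₁) * v ≤ b * (a * K * v / 2) * v :=
      mul_le_mul_of_nonneg_right
        (mul_le_mul_of_nonpos_left (by linarith : a * K * v / 2 ≤ a * K * v - β₁) hbneg.le)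
        hv0.le
    have habK : a * b * K < 0 := mul_neg_of_neg_of_pos (mul_neg_of_pos_of_neg ha hbneg) hK
    have haβ₂ : a * β₂ < 0 := mul_neg_of_pos_of_neg ha (by linarith)
    have hq : 0 < v * v / 2 - v := by
      have h2 : 0 < v * (v - 2) := mul_pos hv0 (by linarith)
      linarith [h2]
    have hfin : b * (a * K * v / 2) * v - a * (b * K * v - β₂) < 0 := by
      linarith [mul_neg_of_neg_of_pos habK hq, haβ₂]
    simp only [hF_def]
    linarith
  -- roots via IVT
  have hcont1 : ContinuousOn F (Icc u M) := fun x hx =>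
    (hFcontAt x (lt_of_lt_of_le hu0 hx.1)).continuousWithinAt
  have hcont2 : ContinuousOn F (Icc M v) := fun x hx =>
    (hFcontAt x (lt_of_lt_of_le hM0 hx.1)).continuousWithinAt
  obtain ⟨g₂, hg₂mem, hFg₂⟩ : ∃ g₂ ∈ Ioo u M, F g₂ = 0 := by
    have := intermediate_value_Ioo huM.le hcont1
    exact this ⟨hFu, hFM⟩
  obtain ⟨g₁, hg₁mem, hFg₁⟩ : ∃ g₁ ∈ Ioo M v, F g₁ = 0 := by
    have := intermediate_value_Ioo' (by linarith : M ≤ v) hcont2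
    exact this ⟨hFv, hFM⟩
  have hg₂0 : 0 < g₂ := lt_trans hu0 hg₂mem.1
  have hg₁0 : 0 < g₁ := lt_trans hM0 hg₁mem.1
  -- positions relative to c
  have hg₂c : g₂ < c := by
    by_contra h
    push_neg at h
    have := hanti (mem_Ici.mpr h) (mem_Ici.mpr (by linarith [hg₂mem.2] : c ≤ M)) hg₂mem.2
    rw [hFg₂] at this
    linarith
  have hg₁c : c < g₁ := by
    by_contra h
    push_neg at h
    have hMc : M ≤ c := le_trans hg₁mem.1.le h
    have := hmono (mem_Ioc.mpr ⟨hM0, hMc⟩) (mem_Ioc.mpr ⟨hg₁0, h⟩) hg₁mem.1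
    rw [hFg₁] at this
    linarith
  -- conclusion
  refine ⟨g₁, g₂, hg₁0, hg₂0, ?_, (hEquiv g₁ hg₁0).mpr hFg₁, (hEquiv g₂ hg₂0).mpr hFg₂,
    ?_, ?_, ?_⟩
  · intro h; rw [h] at hg₁mem; exact absurd hg₂mem.2 (by linarith [hg₁mem.1])
  · intro g hg hgeq
    have hFg : F g = 0 := (hEquiv g hg).mp hgeq
    rcases le_or_gt g c with h | h
    · right
      exact hmono.injOn (mem_Ioc.mpr ⟨hg, h⟩) (mem_Ioc.mpr ⟨hg₂0, hg₂c.le⟩)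
        (by rw [hFg, hFg₂])
    · left
      exact hanti.injOn (mem_Ici.mpr h.le) (mem_Ici.mpr hg₁c.le) (by rw [hFg, hFg₁])
  · exact hg₁mem.1
  · push_neg
    exact hg₂mem.2.le
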